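/- arXiv:2304.10774 — 2 statements merged into one kernel-verified Lean document; each statement's English description precedes it below -/
import Mathlib

section
/- Let H be a real Hilbert space with compatible triple (g,J,ω) and L^± = ker(J ∓ i) ⊂ H_ℂ. The relation W₁⁺ ∼ W₂⁺ on the set Pol^g(H) of orthogonal polarizations, defined by 'the orthogonal projection W₁⁺ → α(W₂⁺) is Hilbert–Schmidt', is an equivalence relation. -/
/-- A (bounded) operator on a complex Hilbert space is Hilbert–Schmidt if ∑ ‖T eᵢ‖² converges
for some (equivalently any) Hilbert basis. -/
def IsHilbertSchmidt {E : Type} [NormedAddCommGroup E] [InnerProductSpace ℂ E]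
    (T : E →L[ℂ] E) : Prop :=
  ∃ (ι : Type) (b : HilbertBasis ι ℂ E), Summable fun i => ‖T (b i)‖ ^ 2

/-- P is the orthogonal projection of E onto the set S. -/
def IsOrthProjOn {E : Type} [NormedAddCommGroup E] [InnerProductSpace ℂ E]
    (S : Set E) (P : E →L[ℂ] E) : Prop :=
  (∀ x, P x ∈ S) ∧ (∀ x ∈ S, P x = x) ∧ (∀ x, ∀ s ∈ S, (inner ℂ (x - P x) s : ℂ) = 0)

/-- W is an orthogonal polarization: W is closed, W ⊥ α(W), and E = W + α(W). -/
def IsOrthPolarization {E : Type} [NormedAddCommGroup E] [InnerProductSpace ℂ E]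
    (α : E → E) (W : Submodule ℂ E) : Prop :=
  IsClosed (W : Set E) ∧
  (∀ x ∈ W, ∀ y ∈ W, (inner ℂ x (α y) : ℂ) = 0) ∧
  (∀ z : E, ∃ x ∈ W, ∃ y ∈ W, z = x + α y)

/-- The relation W₁ ∼ W₂: the restriction to W₁ of the orthogonal projection onto α(W₂) is
Hilbert–Schmidt (expressed as: the composite of the orthogonal projection onto W₁ followed by
the orthogonal projection onto α(W₂) is Hilbert–Schmidt). -/
def HSRel {E : Type} [NormedAddCommGroup E] [InnerProductSpace ℂ E]
    (α : E → E) (W₁ W₂ : Submodule ℂ E) : Prop :=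
  ∀ P Q : E →L[ℂ] E, IsOrthProjOn (W₁ : Set E) P → IsOrthProjOn (α '' (W₂ : Set E)) Q →
    IsHilbertSchmidt (Q.comp P)

open scoped ENNReal NNReal

noncomputable section

namespace HSAux
variable {E : Type} [NormedAddCommGroup E] [InnerProductSpace ℂ E]

lemma parseval [CompleteSpace E] {ι : Type} (b : HilbertBasis ι ℂ E) (x : E) :
    ((‖x‖₊ : ℝ≥0∞) ^ 2) = ∑' i, (‖(inner ℂ (b i) x : ℂ)‖₊ : ℝ≥0∞) ^ 2 := by
  have h2 : HasSum (fun i => ‖(inner ℂ (b i) x : ℂ)‖ ^ 2) (‖x‖ ^ 2) := by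
    have h' := (b.hasSum_inner_mul_inner x x).mapL Complex.reCLM
    convert h' using 1
    · funext i
      simp only [Complex.reCLM_apply, ← inner_conj_symm x (b i),
        Complex.conj_mul', ← Complex.ofReal_pow, Complex.ofReal_re]
    · rw [Complex.reCLM_apply, ← RCLike.re_to_complex, inner_self_eq_norm_sq]
  have h3 : HasSum (fun i => ‖(inner ℂ (b i) x : ℂ)‖₊ ^ 2) (‖x‖₊ ^ 2) := by
    rw [← NNReal.hasSum_coe]
    convert h2 with i <;> push_cast <;> rfl
  have h4 := (ENNReal.hasSum_coe.mpr h3).tsum_eq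
  rw [ENNReal.coe_pow] at h4
  simp only [ENNReal.coe_pow] at h4 ⊢
  exact h4.symm

variable [CompleteSpace E]

def ennSum {ι : Type} (b : HilbertBasis ι ℂ E) (T : E →L[ℂ] E) : ℝ≥0∞ :=
  ∑' i, (‖T (b i)‖₊ : ℝ≥0∞) ^ 2

lemma tsum_comm'' {ι κ : Type} (F : ι → κ → ℝ≥0∞) :
    ∑' i, ∑' j, F i j = ∑' j, ∑' i, F i j := ENNReal.tsum_comm

lemma ennSum_adjoint {ι κ : Type} (b : HilbertBasis ι ℂ E) (f : HilbertBasis κ ℂ E)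
    (T : E →L[ℂ] E) : ennSum b T = ennSum f (ContinuousLinearMap.adjoint T) := by
  unfold ennSum
  calc ∑' i, (‖T (b i)‖₊ : ℝ≥0∞) ^ 2
      = ∑' i, ∑' j, (‖(inner ℂ (f j) (T (b i)) : ℂ)‖₊ : ℝ≥0∞) ^ 2 := by
        exact tsum_congr fun i => parseval f (T (b i))
    _ = ∑' j, ∑' i, (‖(inner ℂ (f j) (T (b i)) : ℂ)‖₊ : ℝ≥0∞) ^ 2 :=
        tsum_comm'' fun i j => (‖(inner ℂ (f j) (T (b i)) : ℂ)‖₊ : ℝ≥0∞) ^ 2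
    _ = ∑' j, ∑' i, (‖(inner ℂ (b i) (ContinuousLinearMap.adjoint T (f j)) : ℂ)‖₊ : ℝ≥0∞) ^ 2 := by
        have key : ∀ (x y : E), ‖(inner ℂ x y : ℂ)‖₊ = ‖(inner ℂ y x : ℂ)‖₊ := fun x y => by
          rw [← inner_conj_symm]; exact nnnorm_star _
        refine tsum_congr fun j => tsum_congr fun i => ?_
        rw [← ContinuousLinearMap.adjoint_inner_left, key]
    _ = ∑' j, (‖ContinuousLinearMap.adjoint T (f j)‖₊ : ℝ≥0∞) ^ 2 := by
        exact tsum_congr fun j => (parseval b _).symm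

lemma ennSum_basis_indep {ι κ : Type} (b : HilbertBasis ι ℂ E) (f : HilbertBasis κ ℂ E)
    (T : E →L[ℂ] E) : ennSum b T = ennSum f T := by
  obtain ⟨w, c, -⟩ := exists_hilbertBasis ℂ E
  rw [ennSum_adjoint b c, ← ennSum_adjoint f c]

lemma summable_iff_ennSum_ne_top {ι : Type} (b : HilbertBasis ι ℂ E) (T : E →L[ℂ] E) :
    (Summable fun i => ‖T (b i)‖ ^ 2) ↔ ennSum b T ≠ ⊤ := by
  rw [show (fun i => ‖T (b i)‖ ^ 2) = fun i => ((‖T (b i)‖₊ ^ 2 : ℝ≥0) : ℝ) by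
    funext i; push_cast; rfl, NNReal.summable_coe,
    ← ENNReal.tsum_coe_ne_top_iff_summable]
  unfold ennSum
  simp [ENNReal.coe_pow]

lemma isHS_iff {ι : Type} (b : HilbertBasis ι ℂ E) (T : E →L[ℂ] E) :
    (∃ (κ : Type) (f : HilbertBasis κ ℂ E), Summable fun i => ‖T (f i)‖ ^ 2) ↔
      ennSum b T ≠ ⊤ := by
  constructor
  · rintro ⟨κ, f, hf⟩
    rw [ennSum_basis_indep b f]
    exact (summable_iff_ennSum_ne_top f T).mp hf
  · intro h
    exact ⟨ι, b, (summable_iff_ennSum_ne_top b T).mpr h⟩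

lemma ennSum_comp_left_ne_top {ι : Type} (b : HilbertBasis ι ℂ E) (S T : E →L[ℂ] E)
    (h : ennSum b T ≠ ⊤) : ennSum b (S.comp T) ≠ ⊤ := by
  have hle : ennSum b (S.comp T) ≤ (‖S‖₊ : ℝ≥0∞) ^ 2 * ennSum b T := by
    rw [ennSum, ennSum, ← ENNReal.tsum_mul_left]
    refine ENNReal.tsum_le_tsum fun i => ?_
    rw [← mul_pow]
    gcongr
    calc (‖S (T (b i))‖₊ : ℝ≥0∞) ≤ ((‖S‖₊ * ‖T (b i)‖₊ : ℝ≥0) : ℝ≥0∞) := by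
          exact_mod_cast ENNReal.coe_le_coe.mpr (S.le_opNNNorm (T (b i)))
      _ = (‖S‖₊ : ℝ≥0∞) * (‖T (b i)‖₊ : ℝ≥0∞) := by push_cast; rfl
  intro htop
  have h2 : (‖S‖₊ : ℝ≥0∞) ^ 2 * ennSum b T = ⊤ := top_le_iff.mp (htop ▸ hle)
  rcases ENNReal.mul_eq_top.mp h2 with ⟨-, h3⟩ | ⟨h3, -⟩
  · exact h h3
  · exact absurd h3 (by simp [ENNReal.pow_ne_top])

lemma ennSum_adjoint_ne_top {ι : Type} (b : HilbertBasis ι ℂ E) (T : E →L[ℂ] E)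
    (h : ennSum b T ≠ ⊤) : ennSum b (ContinuousLinearMap.adjoint T) ≠ ⊤ := by
  rwa [← ennSum_adjoint b b T]

lemma ennSum_comp_right_ne_top {ι : Type} (b : HilbertBasis ι ℂ E) (S T : E →L[ℂ] E)
    (h : ennSum b T ≠ ⊤) : ennSum b (T.comp S) ≠ ⊤ := by
  have h1 := ennSum_comp_left_ne_top b (ContinuousLinearMap.adjoint S) _
    (ennSum_adjoint_ne_top b T h)
  have h2 := ennSum_adjoint_ne_top b _ h1
  rwa [← ContinuousLinearMap.adjoint_comp, ContinuousLinearMap.adjoint_adjoint] at h2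

lemma ennSum_add_ne_top {ι : Type} (b : HilbertBasis ι ℂ E) (S T : E →L[ℂ] E)
    (hS : ennSum b S ≠ ⊤) (hT : ennSum b T ≠ ⊤) : ennSum b (S + T) ≠ ⊤ := by
  have hle : ennSum b (S + T) ≤ 4 * (ennSum b S + ennSum b T) := by
    rw [ennSum, ennSum, ennSum, ← ENNReal.tsum_add, ← ENNReal.tsum_mul_left]
    refine ENNReal.tsum_le_tsum fun i => ?_
    have h1 : (‖(S + T) (b i)‖₊ : ℝ≥0∞) ≤ (‖S (b i)‖₊ : ℝ≥0∞) + (‖T (b i)‖₊ : ℝ≥0∞) := by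
      rw [← ENNReal.coe_add]
      exact_mod_cast nnnorm_add_le _ _
    set a := (‖S (b i)‖₊ : ℝ≥0∞)
    set c := (‖T (b i)‖₊ : ℝ≥0∞)
    calc (‖(S + T) (b i)‖₊ : ℝ≥0∞) ^ 2 ≤ (a + c) ^ 2 := by gcongr
      _ ≤ 4 * (a ^ 2 + c ^ 2) := by
          rcases le_total a c with hac | hac
          · calc (a + c) ^ 2 ≤ (c + c) ^ 2 := by gcongr
              _ = 4 * c ^ 2 := by ring
              _ ≤ 4 * (a ^ 2 + c ^ 2) := by gcongr; exact le_add_self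
          · calc (a + c) ^ 2 ≤ (a + a) ^ 2 := by gcongr
              _ = 4 * a ^ 2 := by ring
              _ ≤ 4 * (a ^ 2 + c ^ 2) := by gcongr; exact le_self_add
  intro htop
  have h2 : (4 : ℝ≥0∞) * (ennSum b S + ennSum b T) = ⊤ := top_le_iff.mp (htop ▸ hle)
  rcases ENNReal.mul_eq_top.mp h2 with ⟨-, h3⟩ | ⟨h3, -⟩
  · exact absurd (ENNReal.add_eq_top.mp h3) (by tauto)
  · exact absurd h3 (by simp)

end HSAux

namespace HSAux
variable {E : Type} [NormedAddCommGroup E] [InnerProductSpace ℂ E]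

/-- canonical projection -/
def pi (K : Submodule ℂ E) [Submodule.HasOrthogonalProjection K] : E →L[ℂ] E :=
  K.subtypeL.comp (Submodule.orthogonalProjectionOnto K)

lemma pi_isOrthProjOn (K : Submodule ℂ E) [Submodule.HasOrthogonalProjection K] :
    IsOrthProjOn (K : Set E) (pi K) := by
  refine ⟨fun x => (Submodule.orthogonalProjectionOnto K x).2, fun x hx => ?_, fun x s hs => ?_⟩
  · show (↑(Submodule.orthogonalProjectionOnto K x) : E) = x
    exact Submodule.starProjection_eq_self_iff.mpr hx
  · exact Submodule.starProjection_inner_eq_zero (K := K) x s hs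

lemma isOrthProjOn_eq {K : Submodule ℂ E} [Submodule.HasOrthogonalProjection K] {P : E →L[ℂ] E}
    (h : IsOrthProjOn (K : Set E) P) : ∀ x, P x = pi K x := by
  intro x
  exact (Submodule.eq_starProjection_of_mem_of_inner_eq_zero (h.1 x)
    (fun w hw => h.2.2 x w hw)).symm

lemma pi_congr [CompleteSpace E] {K K' : Submodule ℂ E} [Submodule.HasOrthogonalProjection K]
    [Submodule.HasOrthogonalProjection K'] (h : K = K') (x : E) : pi K x = pi K' x := by
  subst h; rfl

lemma pi_adjoint [CompleteSpace E] (K : Submodule ℂ E) [CompleteSpace K] :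
    ContinuousLinearMap.adjoint (pi K) = pi K :=
  (isSelfAdjoint_starProjection K).adjoint_eq

section Alpha

variable (α : E → E)

lemma alpha_zero (hα_add : ∀ x y, α (x + y) = α x + α y) : α 0 = 0 := by
  have := hα_add 0 0
  rw [add_zero] at this
  exact left_eq_add.mp this

lemma alpha_sub (hα_add : ∀ x y, α (x + y) = α x + α y)
    (hα_smul : ∀ (c : ℂ) (x : E), α (c • x) = (starRingEnd ℂ) c • α x) (x y : E) :
    α (x - y) = α x - α y := by
  have hneg : α (-y) = -α y := by
    have := hα_smul (-1) y
    simpa using this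
  rw [sub_eq_add_neg, hα_add, hneg, sub_eq_add_neg]

lemma alpha_norm (hα_inner : ∀ x y, (inner ℂ (α x) (α y) : ℂ) = (inner ℂ y x : ℂ)) (x : E) :
    ‖α x‖ = ‖x‖ := by
  have h1 : (‖α x‖ : ℝ) ^ 2 = ‖x‖ ^ 2 := by
    rw [← inner_self_eq_norm_sq (𝕜 := ℂ), ← inner_self_eq_norm_sq (𝕜 := ℂ), hα_inner]
  nlinarith [norm_nonneg (α x), norm_nonneg x]

lemma alpha_isometry (hα_add : ∀ x y, α (x + y) = α x + α y)
    (hα_smul : ∀ (c : ℂ) (x : E), α (c • x) = (starRingEnd ℂ) c • α x)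
    (hα_inner : ∀ x y, (inner ℂ (α x) (α y) : ℂ) = (inner ℂ y x : ℂ)) : Isometry α := by
  refine Isometry.of_dist_eq fun x y => ?_
  rw [dist_eq_norm, dist_eq_norm, ← alpha_sub α hα_add hα_smul, alpha_norm α hα_inner]

/-- The image of a submodule under the antilinear map α, as a submodule. -/
def alphaSub (hα_add : ∀ x y, α (x + y) = α x + α y)
    (hα_smul : ∀ (c : ℂ) (x : E), α (c • x) = (starRingEnd ℂ) c • α x)
    (W : Submodule ℂ E) : Submodule ℂ E where
  carrier := α '' (W : Set E)
  add_mem' := by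
    rintro a b ⟨x, hx, rfl⟩ ⟨y, hy, rfl⟩
    exact ⟨x + y, W.add_mem hx hy, hα_add x y⟩
  zero_mem' := ⟨0, W.zero_mem, alpha_zero α hα_add⟩
  smul_mem' := by
    rintro c a ⟨x, hx, rfl⟩
    refine ⟨(starRingEnd ℂ) c • x, W.smul_mem _ hx, ?_⟩
    rw [hα_smul]
    simp

lemma alphaSub_coe (hα_add : ∀ x y, α (x + y) = α x + α y)
    (hα_smul : ∀ (c : ℂ) (x : E), α (c • x) = (starRingEnd ℂ) c • α x)
    (W : Submodule ℂ E) : (alphaSub α hα_add hα_smul W : Set E) = α '' (W : Set E) := rfl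

lemma alphaSub_closed (hα_add : ∀ x y, α (x + y) = α x + α y)
    (hα_smul : ∀ (c : ℂ) (x : E), α (c • x) = (starRingEnd ℂ) c • α x)
    (hα_invol : ∀ x, α (α x) = x)
    (hα_inner : ∀ x y, (inner ℂ (α x) (α y) : ℂ) = (inner ℂ y x : ℂ))
    (W : Submodule ℂ E) (hW : IsClosed (W : Set E)) :
    IsClosed ((alphaSub α hα_add hα_smul W : Submodule ℂ E) : Set E) := by
  rw [alphaSub_coe]
  have himg : α '' (W : Set E) = α ⁻¹' (W : Set E) := by
    ext x
    constructor
    · rintro ⟨y, hy, rfl⟩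
      simpa [hα_invol y] using hy
    · intro hx
      exact ⟨α x, hx, hα_invol x⟩
  rw [himg]
  exact hW.preimage (alpha_isometry α hα_add hα_smul hα_inner).continuous

lemma alphaSub_invol (hα_add : ∀ x y, α (x + y) = α x + α y)
    (hα_smul : ∀ (c : ℂ) (x : E), α (c • x) = (starRingEnd ℂ) c • α x)
    (hα_invol : ∀ x, α (α x) = x) (W : Submodule ℂ E) :
    alphaSub α hα_add hα_smul (alphaSub α hα_add hα_smul W) = W := by
  apply SetLike.coe_injective
  rw [alphaSub_coe, alphaSub_coe, ← Set.image_comp]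
  ext x
  constructor
  · rintro ⟨y, hy, rfl⟩
    simpa [Function.comp, hα_invol y] using hy
  · intro hx
    exact ⟨x, hx, by simp [Function.comp, hα_invol x]⟩

end Alpha

section Alpha2

variable [CompleteSpace E] (α : E → E)

lemma proj_alpha (hα_add : ∀ x y, α (x + y) = α x + α y)
    (hα_smul : ∀ (c : ℂ) (x : E), α (c • x) = (starRingEnd ℂ) c • α x)
    (hα_invol : ∀ x, α (α x) = x)
    (hα_inner : ∀ x y, (inner ℂ (α x) (α y) : ℂ) = (inner ℂ y x : ℂ))
    (W : Submodule ℂ E) [Submodule.HasOrthogonalProjection W]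
    [Submodule.HasOrthogonalProjection (alphaSub α hα_add hα_smul W)] (x : E) :
    pi (alphaSub α hα_add hα_smul W) x = α (pi W (α x)) := by
  show (alphaSub α hα_add hα_smul W).starProjection x = α (pi W (α x))
  apply Submodule.eq_starProjection_of_mem_of_inner_eq_zero
  · exact ⟨pi W (α x), SetLike.coe_mem _, rfl⟩
  · rintro w ⟨u, hu, rfl⟩
    have hrw : x - α (pi W (α x)) = α (α x - pi W (α x)) := by
      rw [alpha_sub α hα_add hα_smul, hα_invol]
    rw [hrw, hα_inner, inner_eq_zero_symm]
    exact Submodule.starProjection_inner_eq_zero (K := W) (α x) u hu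

lemma alphaSub_eq_orthogonal (hα_add : ∀ x y, α (x + y) = α x + α y)
    (hα_smul : ∀ (c : ℂ) (x : E), α (c • x) = (starRingEnd ℂ) c • α x)
    (W : Submodule ℂ E)
    (h_orth : ∀ x ∈ W, ∀ y ∈ W, (inner ℂ x (α y) : ℂ) = 0)
    (h_span : ∀ z : E, ∃ x ∈ W, ∃ y ∈ W, z = x + α y) :
    alphaSub α hα_add hα_smul W = Wᗮ := by
  apply le_antisymm
  · rintro w ⟨y, hy, rfl⟩
    exact (Submodule.mem_orthogonal W (α y)).mpr fun u hu => h_orth u hu y hy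
  · intro v hv
    obtain ⟨x, hx, y, hy, rfl⟩ := h_span v
    have h1 : (inner ℂ x (x + α y) : ℂ) = 0 := (Submodule.mem_orthogonal W _).mp hv x hx
    rw [inner_add_right, h_orth x hx y hy, add_zero, inner_self_eq_zero] at h1
    subst h1
    rw [zero_add]
    exact ⟨y, hy, rfl⟩

lemma alpha_hilbertBasis (hα_add : ∀ x y, α (x + y) = α x + α y)
    (hα_smul : ∀ (c : ℂ) (x : E), α (c • x) = (starRingEnd ℂ) c • α x)
    (hα_invol : ∀ x, α (α x) = x)
    (hα_inner : ∀ x y, (inner ℂ (α x) (α y) : ℂ) = (inner ℂ y x : ℂ))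
    {ι : Type} (b : HilbertBasis ι ℂ E) :
    ∃ b' : HilbertBasis ι ℂ E, ∀ i, b' i = α (b i) := by
  set v : ι → E := fun i => α (b i) with hv
  classical
  have hon : Orthonormal ℂ v := by
    rw [orthonormal_iff_ite]
    intro i j
    rw [hv, hα_inner]
    have := orthonormal_iff_ite.mp b.orthonormal j i
    rw [this]
    by_cases h : i = j
    · simp [h]
    · simp [h, Ne.symm h]
  have hsp : ⊤ ≤ (Submodule.span ℂ (Set.range v)).topologicalClosure := by
    intro x _
    have hx : α x ∈ closure ((Submodule.span ℂ (Set.range ⇑b) : Submodule ℂ E) : Set E) := by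
      have hdense := b.dense_span
      rw [← Submodule.topologicalClosure_coe, hdense]
      trivial
    have hsub : α '' ((Submodule.span ℂ (Set.range ⇑b) : Submodule ℂ E) : Set E) ⊆
        ((Submodule.span ℂ (Set.range v) : Submodule ℂ E) : Set E) := by
      rintro - ⟨z, hz, rfl⟩
      induction hz using Submodule.span_induction with
      | mem y hy =>
          obtain ⟨i, rfl⟩ := hy
          exact Submodule.subset_span ⟨i, rfl⟩
      | zero => rw [alpha_zero α hα_add]; exact Submodule.zero_mem _
      | add y z _ _ hy hz => rw [hα_add]; exact Submodule.add_mem _ hy hz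
      | smul c y _ hy => rw [hα_smul]; exact Submodule.smul_mem _ _ hy
    have hcont := (alpha_isometry α hα_add hα_smul hα_inner).continuous
    have : x ∈ α '' closure ((Submodule.span ℂ (Set.range ⇑b) : Submodule ℂ E) : Set E) :=
      ⟨α x, hx, hα_invol x⟩
    have h2 := (image_closure_subset_closure_image hcont) this
    exact closure_mono hsub h2
  exact ⟨HilbertBasis.mk hon hsp, fun i => by rw [HilbertBasis.coe_mk]⟩

end Alpha2

end HSAux

end

open HSAux

/-- The relation ∼ is an equivalence relation on the set Pol^g(H) of orthogonal
polarizations. -/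
theorem HSRel_is_equivalence {E : Type} [NormedAddCommGroup E] [InnerProductSpace ℂ E]
    [CompleteSpace E]
    (α : E → E)
    (hα_add : ∀ x y, α (x + y) = α x + α y)
    (hα_smul : ∀ (c : ℂ) (x : E), α (c • x) = (starRingEnd ℂ) c • α x)
    (hα_invol : ∀ x, α (α x) = x)
    (hα_inner : ∀ x y, (inner ℂ (α x) (α y) : ℂ) = (inner ℂ y x : ℂ)) :
    (∀ W : Submodule ℂ E, IsOrthPolarization α W → HSRel α W W) ∧
    (∀ W₁ W₂ : Submodule ℂ E, IsOrthPolarization α W₁ → IsOrthPolarization α W₂ →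
      HSRel α W₁ W₂ → HSRel α W₂ W₁) ∧
    (∀ W₁ W₂ W₃ : Submodule ℂ E, IsOrthPolarization α W₁ → IsOrthPolarization α W₂ →
      IsOrthPolarization α W₃ → HSRel α W₁ W₂ → HSRel α W₂ W₃ → HSRel α W₁ W₃) := by
  obtain ⟨w₀, b₀, -⟩ := exists_hilbertBasis ℂ E
  have hHS : ∀ T : E →L[ℂ] E, IsHilbertSchmidt T ↔ HSAux.ennSum b₀ T ≠ ⊤ := fun T =>
    HSAux.isHS_iff b₀ T
  -- Notation for the α-image submodule
  set A : Submodule ℂ E → Submodule ℂ E := fun W => alphaSub α hα_add hα_smul W with hA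
  have hAcoe : ∀ W : Submodule ℂ E, (A W : Set E) = α '' (W : Set E) := fun W => rfl
  -- instances from polarizations
  have hInst : ∀ W : Submodule ℂ E, IsOrthPolarization α W →
      CompleteSpace W := fun W hW => hW.1.completeSpace_coe
  have hInstA : ∀ W : Submodule ℂ E, IsOrthPolarization α W →
      CompleteSpace (A W) := fun W hW =>
    (alphaSub_closed α hα_add hα_smul hα_invol hα_inner W hW.1).completeSpace_coe
  refine ⟨?_, ?_, ?_⟩
  · -- Reflexivity
    rintro W hW P Q hP hQ
    haveI := hInst W hW
    haveI := hInstA W hW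
    have hQeq : ∀ x, Q x = pi (A W) x := isOrthProjOn_eq (K := A W) hQ
    have hzero : Q.comp P = 0 := by
      ext x
      show Q (P x) = 0
      rw [hQeq]
      have hmem : P x ∈ (A W)ᗮ := by
        rw [Submodule.mem_orthogonal]
        rintro - ⟨y, hy, rfl⟩
        rw [inner_eq_zero_symm]
        exact hW.2.1 (P x) (hP.1 x) y hy
      show (Submodule.orthogonalProjectionOnto (A W) (P x) : E) = 0
      rw [Submodule.orthogonalProjectionOnto_apply_of_mem_orthogonal hmem]
      rfl
    rw [hHS, hzero]
    simp [HSAux.ennSum]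
  · -- Symmetry
    rintro W₁ W₂ h₁ h₂ h₁₂ P Q hP hQ
    haveI := hInst W₁ h₁; haveI := hInst W₂ h₂
    haveI := hInstA W₁ h₁; haveI := hInstA W₂ h₂
    -- hypothesis on canonical projections
    have hT : IsHilbertSchmidt ((pi (A W₂)).comp (pi W₁)) :=
      h₁₂ (pi W₁) (pi (A W₂)) (pi_isOrthProjOn W₁) (pi_isOrthProjOn (A W₂))
    have hAdj : HSAux.ennSum b₀ ((pi W₁).comp (pi (A W₂))) ≠ ⊤ := by
      have h' := ennSum_adjoint_ne_top b₀ _ ((hHS _).mp hT)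
      rwa [ContinuousLinearMap.adjoint_comp, pi_adjoint, pi_adjoint] at h'
    -- pointwise formula for Q ∘ P
    have hPeq : ∀ x, P x = pi W₂ x := isOrthProjOn_eq (K := W₂) hP
    have hQeq : ∀ x, Q x = pi (A W₁) x := isOrthProjOn_eq (K := A W₁) hQ
    have hkey : ∀ x, Q (P x) = α ((pi W₁) ((pi (A W₂)) (α x))) := by
      intro x
      haveI : Submodule.HasOrthogonalProjection (alphaSub α hα_add hα_smul (A W₂)) := by
        rw [alphaSub_invol α hα_add hα_smul hα_invol W₂]
        infer_instance
      have e2 : pi W₂ x = α (pi (A W₂) (α x)) := by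
        have h0 := proj_alpha α hα_add hα_smul hα_invol hα_inner (A W₂) x
        rwa [pi_congr (alphaSub_invol α hα_add hα_smul hα_invol W₂) x] at h0
      have e1 : ∀ y, pi (A W₁) y = α (pi W₁ (α y)) :=
        proj_alpha α hα_add hα_smul hα_invol hα_inner W₁
      rw [hPeq, hQeq, e2, e1, hα_invol]
    -- transfer summability through the α-image basis
    obtain ⟨b', hb'⟩ := alpha_hilbertBasis α hα_add hα_smul hα_invol hα_inner b₀
    have hHS' : IsHilbertSchmidt (Q.comp P) ↔ HSAux.ennSum b' (Q.comp P) ≠ ⊤ :=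
      HSAux.isHS_iff b' (Q.comp P)
    rw [hHS']
    have : HSAux.ennSum b' (Q.comp P) = HSAux.ennSum b₀ ((pi W₁).comp (pi (A W₂))) := by
      unfold HSAux.ennSum
      refine tsum_congr fun i => ?_
      have : ‖(Q.comp P) (b' i)‖₊ = ‖((pi W₁).comp (pi (A W₂))) (b₀ i)‖₊ := by
        rw [hb' i]
        show ‖Q (P (α (b₀ i)))‖₊ = _
        rw [hkey, hα_invol]
        exact NNReal.eq (alpha_norm α hα_inner _)
      rw [this]
    rw [this]
    exact hAdj
  · -- Transitivity
    rintro W₁ W₂ W₃ h₁ h₂ h₃ h₁₂ h₂₃ P Q hP hQ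
    haveI := hInst W₁ h₁; haveI := hInst W₂ h₂; haveI := hInst W₃ h₃
    haveI := hInstA W₁ h₁; haveI := hInstA W₂ h₂; haveI := hInstA W₃ h₃
    have hPeq : ∀ x, P x = pi W₁ x := isOrthProjOn_eq (K := W₁) hP
    have hQeq : ∀ x, Q x = pi (A W₃) x := isOrthProjOn_eq (K := A W₃) hQ
    have hA2 : A W₂ = W₂ᗮ := alphaSub_eq_orthogonal α hα_add hα_smul W₂ h₂.2.1 h₂.2.2
    have hsplit : ∀ y : E, pi (A W₂) y = y - pi W₂ y := by
      intro y
      show (A W₂).starProjection y = y - pi W₂ y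
      apply Submodule.eq_starProjection_of_mem_of_inner_eq_zero
      · rw [hA2]
        exact Submodule.sub_starProjection_mem_orthogonal (K := W₂) y
      · intro w hw
        rw [hA2] at hw
        rw [sub_sub_cancel]
        exact (Submodule.mem_orthogonal W₂ w).mp hw _ (SetLike.coe_mem _)
    have hEq : Q.comp P = ((pi (A W₃)).comp ((pi (A W₂)).comp (pi W₁))) +
        (((pi (A W₃)).comp (pi W₂)).comp (pi W₁)) := by
      ext x
      show Q (P x) = pi (A W₃) (pi (A W₂) (pi W₁ x)) + pi (A W₃) (pi W₂ (pi W₁ x))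
      rw [hPeq, hQeq, hsplit, map_sub]
      abel
    rw [hHS, hEq]
    apply ennSum_add_ne_top
    · exact ennSum_comp_left_ne_top b₀ _ _ ((hHS _).mp
        (h₁₂ (pi W₁) (pi (A W₂)) (pi_isOrthProjOn W₁) (pi_isOrthProjOn (A W₂))))
    · exact ennSum_comp_right_ne_top b₀ _ _ ((hHS _).mp
        (h₂₃ (pi W₂) (pi (A W₃)) (pi_isOrthProjOn W₂) (pi_isOrthProjOn (A W₃))))
end

section
/- Let W⁺ belong to the restricted orthogonal Grassmannian Pol₂^g(H), i.e., W⁺ is an orthogonal polarization such that the orthogonal projection L⁺ → α(W⁺) is Hilbert–Schmidt. Then the orthogonal projection P : W⁺ → L⁺ is a Fredholm operator whose cokernel equals α(ker P); in particular P has Fredholm index zero. -/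
open Metric Filter Topology

noncomputable section

namespace HSProof

lemma tsum_mul_le_sqrt {ι : Type*} (f g : ι → ℝ) (hf0 : ∀ i, 0 ≤ f i) (hg0 : ∀ i, 0 ≤ g i)
    (hf : Summable (fun i => f i ^ 2)) (hg : Summable fun i => g i ^ 2) :
    Summable (fun i => f i * g i) ∧
      ∑' i, f i * g i ≤ Real.sqrt (∑' i, f i ^ 2) * Real.sqrt (∑' i, g i ^ 2) := by
  have hsum : Summable (fun i => f i * g i) := by
    refine Summable.of_nonneg_of_le (fun i => mul_nonneg (hf0 i) (hg0 i))
      (fun i => ?_) ((hf.add hg).div_const 2)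
    have := sq_nonneg (f i - g i)
    nlinarith
  refine ⟨hsum, Summable.tsum_le_of_sum_le hsum fun s => ?_⟩
  have h1 : (∑ i ∈ s, f i * g i) ^ 2 ≤ (∑ i ∈ s, f i ^ 2) * ∑ i ∈ s, g i ^ 2 :=
    Finset.sum_mul_sq_le_sq_mul_sq s f g
  have h2 : ∑ i ∈ s, f i * g i ≤ Real.sqrt ((∑ i ∈ s, f i ^ 2) * ∑ i ∈ s, g i ^ 2) := by
    have h0 : 0 ≤ ∑ i ∈ s, f i * g i :=
      Finset.sum_nonneg fun i _ => mul_nonneg (hf0 i) (hg0 i)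
    nlinarith [Real.sq_sqrt (le_trans (sq_nonneg _) h1),
      Real.sqrt_nonneg ((∑ i ∈ s, f i ^ 2) * ∑ i ∈ s, g i ^ 2)]
  refine h2.trans ?_
  rw [Real.sqrt_mul (Finset.sum_nonneg fun i _ => sq_nonneg _)]
  gcongr
  · exact Summable.sum_le_tsum s (fun i _ => sq_nonneg _) hf
  · exact Summable.sum_le_tsum s (fun i _ => sq_nonneg _) hg

variable {E : Type} [NormedAddCommGroup E] [InnerProductSpace ℂ E] [CompleteSpace E]

lemma isCompactOperator_of_mem_fd (f : E →L[ℂ] E) (V : Submodule ℂ E) [FiniteDimensional ℂ V]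
    (hf : ∀ x, f x ∈ V) : IsCompactOperator (f : E → E) := by
  haveI : ProperSpace V := FiniteDimensional.proper ℂ V
  set g : E →L[ℂ] V := f.codRestrict V hf with hg
  refine ⟨Subtype.val '' Metric.closedBall (0 : V) ‖g‖, (isCompact_closedBall _ _).image
    continuous_subtype_val, ?_⟩
  refine Filter.mem_of_superset (Metric.closedBall_mem_nhds (0 : E) one_pos) ?_
  intro x hx
  refine ⟨g x, ?_, rfl⟩
  simp only [Metric.mem_closedBall, dist_zero_right] at hx ⊢
  calc ‖g x‖ ≤ ‖g‖ * ‖x‖ := g.le_opNorm x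
    _ ≤ ‖g‖ * 1 := by have := g.opNorm_nonneg; nlinarith
    _ = ‖g‖ := mul_one _

/-- truncation of an operator along a Hilbert basis -/
def trunc {ι : Type} (b : HilbertBasis ι ℂ E) (T : E →L[ℂ] E) (F : Finset ι) : E →L[ℂ] E :=
  ∑ i ∈ F, (innerSL ℂ (b i)).smulRight (T (b i))

set_option linter.unusedSectionVars false

lemma trunc_apply {ι : Type} (b : HilbertBasis ι ℂ E) (T : E →L[ℂ] E) (F : Finset ι) (x : E) :
    trunc b T F x = ∑ i ∈ F, (inner ℂ (b i) x : ℂ) • T (b i) := by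
  simp [trunc, ContinuousLinearMap.sum_apply]

lemma norm_sub_trunc_le {ι : Type} (b : HilbertBasis ι ℂ E) (T : E →L[ℂ] E) (F : Finset ι)
    (hT : Summable fun i => ‖T (b i)‖ ^ 2) (x : E) :
    ‖T x - trunc b T F x‖ ≤ Real.sqrt (∑' i : {i // i ∉ F}, ‖T (b i)‖ ^ 2) * ‖x‖ := by
  classical
  set c : ι → ℂ := fun i => (inner ℂ (b i) x : ℂ) with hc
  have hrepr : HasSum (fun i => c i • b i) x := by
    simpa [hc, ← b.repr_apply_apply] using b.hasSum_repr x
  have hTs : HasSum (fun i => c i • T (b i)) (T x) := by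
    have := hrepr.mapL T
    simpa using this
  have hcompl : HasSum (fun i : {i // i ∉ F} => c i • T (b i)) (T x - trunc b T F x) := by
    exact (Finset.hasSum_compl_iff (f := fun i => c i • T (b i)) F).2
      (by simpa [trunc_apply, hc, sub_add_cancel] using hTs)
  have horth : Orthonormal ℂ (fun i : {i // i ∉ F} => b i) :=
    b.orthonormal.comp _ Subtype.val_injective
  have hbessel_sum : Summable fun i : {i // i ∉ F} => ‖c i‖ ^ 2 :=
    horth.inner_products_summable x
  have hbessel : ∑' i : {i // i ∉ F}, ‖c i‖ ^ 2 ≤ ‖x‖ ^ 2 :=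
    horth.tsum_inner_products_le x
  have hT' : Summable fun i : {i // i ∉ F} => ‖T (b i)‖ ^ 2 := hT.subtype _
  obtain ⟨hsum, hcs⟩ := tsum_mul_le_sqrt (fun i : {i // i ∉ F} => ‖c i‖)
    (fun i => ‖T (b i)‖) (fun i => norm_nonneg _) (fun i => norm_nonneg _) hbessel_sum hT'
  have h1 : ‖T x - trunc b T F x‖ ≤ ∑' i : {i // i ∉ F}, ‖c i‖ * ‖T (b i)‖ := by
    rw [← hcompl.tsum_eq]
    refine (norm_tsum_le_tsum_norm ?_).trans_eq ?_
    · simpa [norm_smul] using hsum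
    · simp [norm_smul]
  refine h1.trans (hcs.trans ?_)
  rw [mul_comm]
  gcongr
  calc Real.sqrt (∑' i : {i // i ∉ F}, ‖c i‖ ^ 2) ≤ Real.sqrt (‖x‖ ^ 2) :=
        Real.sqrt_le_sqrt hbessel
    _ = ‖x‖ := by rw [Real.sqrt_sq (norm_nonneg _)]

lemma isCompactOperator_trunc {ι : Type} (b : HilbertBasis ι ℂ E) (T : E →L[ℂ] E)
    (F : Finset ι) : IsCompactOperator (trunc b T F : E → E) := by
  haveI : FiniteDimensional ℂ (Submodule.span ℂ ((fun i => T (b i)) '' (F : Set ι))) :=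
    FiniteDimensional.span_of_finite ℂ (F.finite_toSet.image _)
  refine isCompactOperator_of_mem_fd _ (Submodule.span ℂ ((fun i => T (b i)) '' (F : Set ι)))
    fun x => ?_
  rw [trunc_apply]
  exact Submodule.sum_mem _ fun i hi =>
    Submodule.smul_mem _ _ (Submodule.subset_span ⟨i, hi, rfl⟩)

lemma trunc_adjoint {ι : Type} (b : HilbertBasis ι ℂ E) (T : E →L[ℂ] E) (F : Finset ι) :
    ContinuousLinearMap.adjoint (trunc b T F) =
      ∑ i ∈ F, (innerSL ℂ (T (b i))).smulRight (b i) := by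
  symm
  rw [ContinuousLinearMap.eq_adjoint_iff]
  intro x y
  simp only [ContinuousLinearMap.sum_apply, ContinuousLinearMap.smulRight_apply,
    innerSL_apply_apply, trunc_apply, sum_inner, inner_sum, inner_smul_left, inner_smul_right,
    inner_conj_symm]
  exact Finset.sum_congr rfl fun i _ => by ring

lemma isCompactOperator_adjoint_trunc {ι : Type} (b : HilbertBasis ι ℂ E) (T : E →L[ℂ] E)
    (F : Finset ι) : IsCompactOperator (ContinuousLinearMap.adjoint (trunc b T F) : E → E) := by
  rw [trunc_adjoint]
  haveI : FiniteDimensional ℂ (Submodule.span ℂ ((fun i => (b i : E)) '' (F : Set ι))) :=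
    FiniteDimensional.span_of_finite ℂ (F.finite_toSet.image _)
  refine isCompactOperator_of_mem_fd _ (Submodule.span ℂ ((fun i => (b i : E)) '' (F : Set ι)))
    fun x => ?_
  simp only [ContinuousLinearMap.sum_apply, ContinuousLinearMap.smulRight_apply]
  exact Submodule.sum_mem _ fun i hi =>
    Submodule.smul_mem _ _ (Submodule.subset_span ⟨i, hi, rfl⟩)

lemma isCompact_of_HS (T : E →L[ℂ] E) (h : IsHilbertSchmidt T) :
    IsCompactOperator (T : E → E) ∧
      IsCompactOperator (ContinuousLinearMap.adjoint T : E → E) := by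
  obtain ⟨ι, b, hT⟩ := h
  have htail : Tendsto (fun F : Finset ι => Real.sqrt (∑' i : {i // i ∉ F}, ‖T (b i)‖ ^ 2))
      atTop (𝓝 0) := by
    have h0 := tendsto_tsum_compl_atTop_zero (fun i => ‖T (b i)‖ ^ 2)
    exact (Real.continuous_sqrt.tendsto' 0 0 Real.sqrt_zero).comp h0
  have hnorm : ∀ F : Finset ι, ‖T - trunc b T F‖ ≤
      Real.sqrt (∑' i : {i // i ∉ F}, ‖T (b i)‖ ^ 2) := fun F =>
    ContinuousLinearMap.opNorm_le_bound _ (Real.sqrt_nonneg _) fun x => by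
      simpa using norm_sub_trunc_le b T F hT x
  have hcv : Tendsto (fun F : Finset ι => trunc b T F) atTop (𝓝 T) := by
    rw [tendsto_iff_norm_sub_tendsto_zero]
    refine squeeze_zero (fun F => norm_nonneg _) (fun F => ?_) htail
    rw [norm_sub_rev]; exact hnorm F
  refine ⟨isCompactOperator_of_tendsto hcv (Eventually.of_forall fun F =>
    isCompactOperator_trunc b T F), ?_⟩
  have hcv' : Tendsto (fun F : Finset ι => ContinuousLinearMap.adjoint (trunc b T F)) atTop
      (𝓝 (ContinuousLinearMap.adjoint T)) :=
    ((ContinuousLinearMap.adjoint (E := E) (F := E)).continuous.tendsto T).comp hcv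
  exact isCompactOperator_of_tendsto hcv' (Eventually.of_forall fun F =>
    isCompactOperator_adjoint_trunc b T F)

lemma selfadj_of_proj (S : Set E) (P : E →L[ℂ] E) (h : IsOrthProjOn S P) (x y : E) :
    (inner ℂ (P x) y : ℂ) = inner ℂ x (P y) := by
  obtain ⟨h1, _, h3⟩ := h
  have e1 : (inner ℂ (P x) (y - P y) : ℂ) = 0 := by
    rw [← inner_conj_symm, h3 y (P x) (h1 x), map_zero]
  have e2 : (inner ℂ (x - P x) (P y) : ℂ) = 0 := h3 x (P y) (h1 y)
  have e3 : (inner ℂ (P x) y : ℂ) = inner ℂ (P x) (P y) := by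
    have := inner_sub_right (𝕜 := ℂ) (P x) y (P y)
    rw [e1] at this
    linear_combination -this
  have e4 : (inner ℂ x (P y) : ℂ) = inner ℂ (P x) (P y) := by
    have := inner_sub_left (𝕜 := ℂ) x (P x) (P y)
    rw [e2] at this
    linear_combination -this
  rw [e3, e4]

end HSProof

end
set_option synthInstance.maxHeartbeats 1000000 in
set_option maxHeartbeats 1000000 in
/-- If W⁺ is an orthogonal polarization in the restricted Grassmannian Pol₂^g(H) (i.e. the
orthogonal projection L⁺ → α(W⁺) is Hilbert–Schmidt), then the orthogonal projection
P : W⁺ → L⁺ is Fredholm: its kernel is finite-dimensional, its range is closed, its cokernel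
(the orthogonal complement of its range in L⁺) equals α(ker P), and hence its index is zero. -/
theorem restricted_grassmannian_projection_fredholm_index_zero {E : Type}
    [NormedAddCommGroup E] [InnerProductSpace ℂ E] [CompleteSpace E]
    (α : E → E) (J : E →L[ℂ] E)
    (hα_add : ∀ x y, α (x + y) = α x + α y)
    (hα_smul : ∀ (c : ℂ) (x : E), α (c • x) = (starRingEnd ℂ) c • α x)
    (hα_invol : ∀ x, α (α x) = x)
    (hα_inner : ∀ x y, (inner ℂ (α x) (α y) : ℂ) = (inner ℂ y x : ℂ))
    (hJJ : ∀ x, J (J x) = -x)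
    (hJα : ∀ x, J (α x) = α (J x))
    (hJskew : ∀ x y, (inner ℂ (J x) y : ℂ) = - (inner ℂ x (J y) : ℂ))
    (Wp : Submodule ℂ E)
    (hWp_closed : IsClosed (Wp : Set E))
    (hWp_orth : ∀ x ∈ Wp, ∀ y ∈ Wp, (inner ℂ x (α y) : ℂ) = 0)
    (hWp_span : ∀ z : E, ∃ x ∈ Wp, ∃ y ∈ Wp, z = x + α y)
    (hHS : ∀ P Q : E →L[ℂ] E,
      IsOrthProjOn ((LinearMap.ker ((J - Complex.I • (1 : E →L[ℂ] E) : E →L[ℂ] E) : E →ₗ[ℂ] E) : Submodule ℂ E) : Set E) P →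
      IsOrthProjOn (α '' (Wp : Set E)) Q → IsHilbertSchmidt (Q.comp P))
    (Pp : E →L[ℂ] E)
    (hPp : IsOrthProjOn
      ((LinearMap.ker ((J - Complex.I • (1 : E →L[ℂ] E) : E →L[ℂ] E) : E →ₗ[ℂ] E) : Submodule ℂ E) : Set E) Pp) :
    FiniteDimensional ℂ ↥(Wp ⊓ LinearMap.ker (Pp : E →ₗ[ℂ] E)) ∧
    IsClosed ((Submodule.map (Pp : E →ₗ[ℂ] E) Wp : Submodule ℂ E) : Set E) ∧
    ({y : E | y ∈ LinearMap.ker ((J - Complex.I • (1 : E →L[ℂ] E) : E →L[ℂ] E) : E →ₗ[ℂ] E) ∧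
        ∀ r ∈ Submodule.map (Pp : E →ₗ[ℂ] E) Wp, (inner ℂ r y : ℂ) = 0}
      = α '' ((Wp ⊓ LinearMap.ker (Pp : E →ₗ[ℂ] E) : Submodule ℂ E) : Set E)) ∧
    Module.finrank ℂ ↥(Wp ⊓ LinearMap.ker (Pp : E →ₗ[ℂ] E)) =
      Module.finrank ℂ
        ↥(LinearMap.ker ((J - Complex.I • (1 : E →L[ℂ] E) : E →L[ℂ] E) : E →ₗ[ℂ] E) ⊓ (Submodule.map (Pp : E →ₗ[ℂ] E) Wp)ᗮ) := by
  classical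
  have hPp1 : ∀ x, Pp x ∈ (LinearMap.ker ((J - Complex.I • (1 : E →L[ℂ] E) : E →L[ℂ] E) : E →ₗ[ℂ] E) : Submodule ℂ E) :=
    hPp.1
  have hPp2 := hPp.2.1
  have hPp3 := hPp.2.2
  set Lp : Submodule ℂ E := LinearMap.ker ((J - Complex.I • (1 : E →L[ℂ] E) : E →L[ℂ] E) : E →ₗ[ℂ] E) with hLpdef
  set Lm : Submodule ℂ E := LinearMap.ker ((J + Complex.I • (1 : E →L[ℂ] E) : E →L[ℂ] E) : E →ₗ[ℂ] E) with hLmdef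
  have memLp : ∀ x : E, x ∈ Lp ↔ J x = Complex.I • x := by
    intro x
    simp [hLpdef, LinearMap.mem_ker, sub_eq_zero, ContinuousLinearMap.sub_apply,
      ContinuousLinearMap.smul_apply, ContinuousLinearMap.one_apply]
  have memLm : ∀ x : E, x ∈ Lm ↔ J x = -(Complex.I • x) := by
    intro x
    simp [hLmdef, LinearMap.mem_ker, add_eq_zero_iff_eq_neg, ContinuousLinearMap.add_apply,
      ContinuousLinearMap.smul_apply, ContinuousLinearMap.one_apply]
  -- α basics
  have hα0 : α 0 = 0 := by
    have h : α 0 = α 0 + α 0 := by simpa using (hα_add 0 0).symm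
    exact (left_eq_add.mp h)
  have hαsub : ∀ x y, α (x - y) = α x - α y := by
    intro x y
    have h := hα_add (x - y) y
    rw [sub_add_cancel] at h
    exact eq_sub_of_add_eq h.symm
  have hα_norm : ∀ x, ‖α x‖ = ‖x‖ := by
    intro x
    have h := hα_inner x x
    have h3 : ‖α x‖ ^ 2 = ‖x‖ ^ 2 := by
      rw [@norm_sq_eq_re_inner ℂ, @norm_sq_eq_re_inner ℂ, h]
    rw [← Real.sqrt_sq (norm_nonneg (α x)), ← Real.sqrt_sq (norm_nonneg x), h3]
  have hα_cont : Continuous α := by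
    have hiso : Isometry α := Isometry.of_dist_eq fun x y => by
      rw [dist_eq_norm, dist_eq_norm, ← hαsub, hα_norm]
    exact hiso.continuous
  -- α exchanges Lp and Lm
  have hαLp : ∀ x ∈ Lp, α x ∈ Lm := by
    intro x hx
    rw [memLp] at hx
    rw [memLm, hJα, hx, hα_smul]
    simp [Complex.conj_I, neg_smul]
  have hαLm : ∀ x ∈ Lm, α x ∈ Lp := by
    intro x hx
    rw [memLm] at hx
    rw [memLp, hJα, hx, ← neg_smul, hα_smul]
    simp [Complex.conj_I, neg_smul]
  -- orthogonality of Lp and Lm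
  have horth : ∀ u ∈ Lp, ∀ v ∈ Lm, (inner ℂ u v : ℂ) = 0 := by
    intro u hu v hv
    rw [memLp] at hu
    rw [memLm] at hv
    have h := hJskew u v
    rw [hu, hv] at h
    rw [inner_smul_left, inner_neg_right, inner_smul_right] at h
    have h2 : (2 : ℂ) * Complex.I * (inner ℂ u v : ℂ) = 0 := by
      simp only [Complex.conj_I] at h
      linear_combination -h
    have hI : (2 : ℂ) * Complex.I ≠ 0 := by
      simp [Complex.I_ne_zero]
    exact (mul_eq_zero.mp h2).resolve_left hI
  -- decomposition into Lp ⊕ Lm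
  have hdecomp : ∀ x : E, ∃ a b : E, a ∈ Lp ∧ b ∈ Lm ∧ x = a + b := by
    intro x
    refine ⟨(2⁻¹ : ℂ) • (x - Complex.I • J x), (2⁻¹ : ℂ) • (x + Complex.I • J x), ?_, ?_, ?_⟩
    · rw [memLp, map_smul, map_sub, map_smul, hJJ]
      match_scalars <;> simp <;> ring_nf <;> simp [Complex.I_sq] <;> ring
    · rw [memLm, map_smul, map_add, map_smul, hJJ]
      match_scalars <;> simp <;> ring_nf <;> simp [Complex.I_sq] <;> ring
    · match_scalars <;> ring
  -- kernel of Pp is Lm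
  have hker : ∀ b ∈ Lm, Pp b = 0 := by
    intro b hb
    have h1 : (inner ℂ (Pp b) b : ℂ) = 0 := horth (Pp b) (hPp1 b) b hb
    have h2 : (inner ℂ (b - Pp b) (Pp b) : ℂ) = 0 := hPp3 b (Pp b) (hPp1 b)
    have h3 : (inner ℂ b (Pp b) : ℂ) = 0 := by rw [← inner_conj_symm, h1, map_zero]
    rw [inner_sub_left, h3] at h2
    have h4 : (inner ℂ (Pp b) (Pp b) : ℂ) = 0 := by linear_combination -h2
    exact inner_self_eq_zero.mp h4
  have hPp_eq : ∀ x a b : E, a ∈ Lp → b ∈ Lm → x = a + b → Pp x = a := by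
    intro x a b ha hb hx
    rw [hx, map_add, hPp2 a ha, hker b hb, add_zero]
  have hsub : ∀ x, x - Pp x ∈ Lm := by
    intro x
    obtain ⟨a, b, ha, hb, hx⟩ := hdecomp x
    have h := hPp_eq x a b ha hb hx
    have h2 : x - Pp x = b := by rw [h, hx]; abel
    rw [h2]; exact hb
  have hker_iff : ∀ x, Pp x = 0 ↔ x ∈ Lm := by
    intro x
    constructor
    · intro h0
      have := hsub x
      rwa [h0, sub_zero] at this
    · exact hker x
  have hPp_inner : ∀ x y, y ∈ Lp → (inner ℂ (Pp x) y : ℂ) = inner ℂ x y := by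
    intro x y hy
    have h := hPp3 x y hy
    rw [inner_sub_left] at h
    linear_combination -h
  -- the conjugate subspace W' = α(Wp)
  have hW'add : ∀ {a b : E}, a ∈ α '' (Wp : Set E) → b ∈ α '' (Wp : Set E) →
      a + b ∈ α '' (Wp : Set E) := by
    rintro a b ⟨x, hx, rfl⟩ ⟨y, hy, rfl⟩
    exact ⟨x + y, Wp.add_mem hx hy, hα_add x y⟩
  have hW'zero : (0 : E) ∈ α '' (Wp : Set E) := ⟨0, Wp.zero_mem, hα0⟩
  have hW'smul : ∀ (c : ℂ) {a : E}, a ∈ α '' (Wp : Set E) → c • a ∈ α '' (Wp : Set E) := by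
    rintro c a ⟨x, hx, rfl⟩
    refine ⟨(starRingEnd ℂ) c • x, Wp.smul_mem _ hx, ?_⟩
    rw [hα_smul]
    simp
  set W' : Submodule ℂ E :=
    { carrier := α '' (Wp : Set E)
      add_mem' := hW'add
      zero_mem' := hW'zero
      smul_mem' := hW'smul } with hW'def
  have hW'mem : ∀ z : E, z ∈ W' ↔ z ∈ α '' (Wp : Set E) := fun z => Iff.rfl
  have hW'closed : IsClosed (W' : Set E) := by
    have himg : α '' (Wp : Set E) = α ⁻¹' (Wp : Set E) := by
      ext z
      constructor
      · rintro ⟨x, hx, rfl⟩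
        simpa [Set.mem_preimage, hα_invol] using hx
      · intro hz
        exact ⟨α z, hz, hα_invol z⟩
    show IsClosed (α '' (Wp : Set E))
    rw [himg]
    exact hWp_closed.preimage hα_cont
  -- orthogonal complement of Wp is W'
  have hWperp : ∀ z : E, (∀ u ∈ Wp, (inner ℂ u z : ℂ) = 0) ↔ z ∈ α '' (Wp : Set E) := by
    intro z
    constructor
    · intro H
      obtain ⟨x, hx, y, hy, rfl⟩ := hWp_span z
      have h1 := H x hx
      rw [inner_add_right, hWp_orth x hx y hy, add_zero] at h1
      have hx0 : x = 0 := inner_self_eq_zero.mp h1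
      exact ⟨y, hy, by rw [hx0, zero_add]⟩
    · rintro ⟨y, hy, rfl⟩ u hu
      exact hWp_orth u hu y hy
  haveI hW'complete : CompleteSpace W' := hW'closed.completeSpace_coe
  set Q : E →L[ℂ] E := W'.subtypeL.comp (Submodule.orthogonalProjection W') with hQdef
  have hQproj : IsOrthProjOn (α '' (Wp : Set E)) Q := by
    refine ⟨fun x => ?_, fun x hx => ?_, fun x s hs => ?_⟩
    · exact (Submodule.orthogonalProjection W' x).2
    · exact Submodule.starProjection_eq_self_iff.mpr hx
    · exact Submodule.starProjection_inner_eq_zero x s hs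
  -- the Hilbert-Schmidt operator and its compactness
  have hKHS : IsHilbertSchmidt (Q.comp Pp) := hHS Pp Q hPp hQproj
  obtain ⟨hKcpt, hKadj_cpt⟩ := HSProof.isCompact_of_HS _ hKHS
  have hPadj : ContinuousLinearMap.adjoint Pp = Pp :=
    ((ContinuousLinearMap.eq_adjoint_iff Pp Pp).2
      (fun x y => HSProof.selfadj_of_proj _ Pp hPp x y)).symm
  have hQadj : ContinuousLinearMap.adjoint Q = Q :=
    ((ContinuousLinearMap.eq_adjoint_iff Q Q).2
      (fun x y => HSProof.selfadj_of_proj _ Q hQproj x y)).symm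
  have hKadj_eq : ContinuousLinearMap.adjoint (Q.comp Pp) = Pp.comp Q := by
    rw [ContinuousLinearMap.adjoint_comp, hPadj, hQadj]
  rw [hKadj_eq] at hKadj_cpt
  -- the kernel N
  set N : Submodule ℂ E := Wp ⊓ LinearMap.ker (Pp : E →ₗ[ℂ] E) with hNdef
  have memN : ∀ x : E, x ∈ N ↔ x ∈ Wp ∧ Pp x = 0 := by
    intro x
    rw [hNdef, Submodule.mem_inf]
    simp [LinearMap.mem_ker]
  have hN_closed : IsClosed (N : Set E) := by
    rw [hNdef, Submodule.coe_inf]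
    exact hWp_closed.inter (ContinuousLinearMap.isClosed_ker Pp)
  -- finite dimensionality of N
  have hfix : ∀ x ∈ N, α ((Q.comp Pp) (α x)) = x := by
    intro x hx
    rw [memN] at hx
    have hxLm : x ∈ Lm := (hker_iff x).mp hx.2
    have hαx : α x ∈ Lp := hαLm x hxLm
    rw [ContinuousLinearMap.comp_apply, hPp2 (α x) hαx, hQproj.2.1 (α x) ⟨x, hx.1, rfl⟩]
    exact hα_invol x
  have hNfd : FiniteDimensional ℂ ↥N := by
    obtain ⟨C, hCcpt, hCnhds⟩ := hKcpt
    obtain ⟨δ, hδ0, hδ⟩ := Metric.mem_nhds_iff.mp hCnhds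
    set r := δ / 2 with hr
    have hr0 : 0 < r := by positivity
    have hSsub : (Subtype.val '' Metric.closedBall (0 : ↥N) r) ⊆ α '' C := by
      rintro z ⟨w, hw, rfl⟩
      have hwN : (w : E) ∈ N := w.2
      have hnorm : ‖(w : E)‖ ≤ r := by
        simpa [Metric.mem_closedBall, dist_zero_right] using hw
      have hball : α (w : E) ∈ Metric.ball (0 : E) δ := by
        simp only [Metric.mem_ball, dist_zero_right, hα_norm]
        linarith
      exact ⟨_, hδ hball, hfix w hwN⟩
    have hSeq : Subtype.val '' Metric.closedBall (0 : ↥N) r =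
        (N : Set E) ∩ Metric.closedBall (0 : E) r := by
      ext z
      constructor
      · rintro ⟨w, hw, rfl⟩
        exact ⟨w.2, by simpa [Metric.mem_closedBall, dist_zero_right] using hw⟩
      · rintro ⟨hzN, hz⟩
        exact ⟨⟨z, hzN⟩, by simpa [Metric.mem_closedBall, dist_zero_right] using hz, rfl⟩
    have hScl : IsClosed (Subtype.val '' Metric.closedBall (0 : ↥N) r) := by
      rw [hSeq]
      exact hN_closed.inter Metric.isClosed_closedBall
    have hScpt : IsCompact (Subtype.val '' Metric.closedBall (0 : ↥N) r) :=
      (hCcpt.image hα_cont).of_isClosed_subset hScl hSsub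
    have hball_cpt : IsCompact (Metric.closedBall (0 : ↥N) r) :=
      Topology.IsEmbedding.subtypeVal.isCompact_iff.mpr hScpt
    exact FiniteDimensional.of_isCompact_closedBall₀ ℂ hr0 hball_cpt
  -- Part 2: closed range
  haveI := hNfd
  haveI : CompleteSpace ↥N := FiniteDimensional.complete ℂ N
  set M : Submodule ℂ E := Wp ⊓ Nᗮ with hMdef
  have hM_le : M ≤ Wp := inf_le_left
  have hN_le : N ≤ Wp := inf_le_left
  have hM_closed : IsClosed (M : Set E) := by
    rw [hMdef, Submodule.coe_inf]
    exact hWp_closed.inter N.isClosed_orthogonal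
  have hdec : ∀ x ∈ Wp, ∃ n, n ∈ N ∧ x - n ∈ M := by
    intro x hx
    refine ⟨Submodule.orthogonalProjection N x, (Submodule.orthogonalProjection N x).2, ?_⟩
    rw [hMdef, Submodule.mem_inf]
    exact ⟨Wp.sub_mem hx (hN_le (Submodule.orthogonalProjection N x).2),
      Submodule.sub_starProjection_mem_orthogonal x⟩
  have hkey : ∀ x ∈ Wp, x - Pp x = α ((Pp.comp Q) (α x)) := by
    intro x hx
    obtain ⟨a, b, haLp, hbLm, hab⟩ := hdecomp x
    have hPpx : Pp x = a := hPp_eq x a b haLp hbLm hab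
    have hQαx : Q (α x) = α x := hQproj.2.1 (α x) ⟨x, hx, rfl⟩
    have hαx : α x = α b + α a := by rw [hab, hα_add, add_comm]
    have hPpαx : Pp (α x) = α b := hPp_eq (α x) (α b) (α a) (hαLm b hbLm) (hαLp a haLp) hαx
    rw [ContinuousLinearMap.comp_apply, hQαx, hPpαx, hα_invol, hPpx, hab]
    abel
  -- a lower bound for Pp on M
  have hbdd : ∃ c : ℝ, 0 < c ∧ ∀ x ∈ M, c * ‖x‖ ≤ ‖Pp x‖ := by
    by_contra hcon
    push_neg at hcon
    choose x hxM hxlt using fun n : ℕ => hcon (1 / (n + 1)) (by positivity)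
    have hxne : ∀ n, x n ≠ 0 := by
      intro n h0
      have := hxlt n
      rw [h0] at this
      simp at this
    set u : ℕ → E := fun n => ((‖x n‖ : ℝ) : ℂ)⁻¹ • x n with hu
    have hu_mem : ∀ n, u n ∈ M := fun n => M.smul_mem _ (hxM n)
    have hu_norm : ∀ n, ‖u n‖ = 1 := by
      intro n
      rw [hu, norm_smul, norm_inv, Complex.norm_real, Real.norm_eq_abs, abs_of_nonneg (norm_nonneg _),
        inv_mul_cancel₀ (norm_ne_zero_iff.mpr (hxne n))]
    have hPu : ∀ n, ‖Pp (u n)‖ ≤ 1 / (n + 1) := by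
      intro n
      rw [hu]
      simp only [map_smul, norm_smul, norm_inv, Complex.norm_real, Real.norm_eq_abs,
        abs_of_nonneg (norm_nonneg (x n))]
      have hlt := (hxlt n).le
      have hxpos : (0:ℝ) < ‖x n‖ := norm_pos_iff.mpr (hxne n)
      calc ‖x n‖⁻¹ * ‖Pp (x n)‖ ≤ ‖x n‖⁻¹ * (1 / (n + 1) * ‖x n‖) :=
            mul_le_mul_of_nonneg_left hlt (inv_nonneg.mpr (norm_nonneg _))
        _ = 1 / (n + 1) := by field_simp
    have hPu0 : Filter.Tendsto (fun n => Pp (u n)) Filter.atTop (nhds 0) :=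
      squeeze_zero_norm hPu tendsto_one_div_add_atTop_nhds_zero_nat
    obtain ⟨C₂, hC₂cpt, hC₂sub⟩ :=
      (hKadj_cpt.image_closedBall_subset_compact
        (f := ((Pp.comp Q : E →L[ℂ] E) : E →ₗ[ℂ] E)) 1)
    have hvC : ∀ n, (Pp.comp Q) (α (u n)) ∈ C₂ := by
      intro n
      refine hC₂sub ⟨α (u n), ?_, rfl⟩
      simp [Metric.mem_closedBall, dist_zero_right, hα_norm, hu_norm n]
    obtain ⟨z, _, φ, hφmono, hφtendsto⟩ := hC₂cpt.isSeqCompact hvC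
    have h1 : ∀ n, u (φ n) = Pp (u (φ n)) + α ((Pp.comp Q) (α (u (φ n)))) := by
      intro n
      exact sub_eq_iff_eq_add'.mp (hkey (u (φ n)) (hM_le (hu_mem (φ n))))
    have hulim : Filter.Tendsto (fun n => u (φ n)) Filter.atTop (nhds (α z)) := by
      have h2 : Filter.Tendsto (fun n => Pp (u (φ n)) + α ((Pp.comp Q) (α (u (φ n)))))
          Filter.atTop (nhds (0 + α z)) :=
        (hPu0.comp hφmono.tendsto_atTop).add ((hα_cont.tendsto z).comp hφtendsto)
      rw [zero_add] at h2
      exact h2.congr fun n => (h1 n).symm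
    have hαz_norm : ‖α z‖ = 1 := by
      have h3 : Filter.Tendsto (fun n => ‖u (φ n)‖) Filter.atTop (nhds ‖α z‖) :=
        (continuous_norm.tendsto _).comp hulim
      have h4 : Filter.Tendsto (fun n => ‖u (φ n)‖) Filter.atTop (nhds 1) := by
        simpa [hu_norm] using tendsto_const_nhds (α := ℕ) (a := (1 : ℝ))
      exact tendsto_nhds_unique h3 h4
    have hαzM : α z ∈ M := hM_closed.mem_of_tendsto hulim
      (Filter.Eventually.of_forall fun n => hu_mem (φ n))
    have hPpαz : Pp (α z) = 0 := by
      have h5 : Filter.Tendsto (fun n => Pp (u (φ n))) Filter.atTop (nhds (Pp (α z))) :=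
        (Pp.continuous.tendsto _).comp hulim
      exact tendsto_nhds_unique h5 (hPu0.comp hφmono.tendsto_atTop)
    have hαzN : α z ∈ N := (memN _).mpr ⟨hM_le hαzM, hPpαz⟩
    have hz0 : α z = 0 := by
      have hperp : α z ∈ Nᗮ := (Submodule.mem_inf.mp hαzM).2
      exact inner_self_eq_zero.mp ((Submodule.mem_orthogonal N (α z)).mp hperp (α z) hαzN)
    rw [hz0] at hαz_norm
    simp at hαz_norm
  obtain ⟨c, hc0, hc⟩ := hbdd
  set f : ↥M →L[ℂ] E := Pp.comp M.subtypeL with hfdef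
  have hanti : AntilipschitzWith (c⁻¹.toNNReal) f := by
    refine f.antilipschitz_of_bound fun w => ?_
    have h := hc (w : E) w.2
    have hcoe : ((c⁻¹.toNNReal : NNReal) : ℝ) = c⁻¹ := Real.coe_toNNReal _ (by positivity)
    rw [hcoe]
    have hfw : ‖f w‖ = ‖Pp (w : E)‖ := rfl
    have hww : ‖w‖ = ‖(w : E)‖ := rfl
    rw [hfw, hww]
    calc ‖(w : E)‖ = c⁻¹ * (c * ‖(w : E)‖) := by field_simp
      _ ≤ c⁻¹ * ‖Pp (w : E)‖ := mul_le_mul_of_nonneg_left h (by positivity)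
  haveI : CompleteSpace ↥M := hM_closed.completeSpace_coe
  have hclosed_range : IsClosed (Set.range (f : ↥M → E)) :=
    hanti.isClosed_range f.uniformContinuous
  have hrange_eq : Set.range (f : ↥M → E) = ((Submodule.map (Pp : E →ₗ[ℂ] E) Wp : Submodule ℂ E) : Set E) := by
    ext y
    constructor
    · rintro ⟨w, rfl⟩
      exact ⟨(w : E), hM_le w.2, rfl⟩
    · rintro ⟨x, hxWp, rfl⟩
      obtain ⟨n, hnN, hnM⟩ := hdec x hxWp
      have hn0 : Pp n = 0 := ((memN n).mp hnN).2
      refine ⟨⟨x - n, hnM⟩, ?_⟩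
      show Pp (x - n) = Pp x
      rw [map_sub, hn0, sub_zero]
  have goal2 : IsClosed ((Submodule.map (Pp : E →ₗ[ℂ] E) Wp : Submodule ℂ E) : Set E) := by
    rw [← hrange_eq]
    exact hclosed_range
  -- Part 3: identification of the cokernel
  have goal3 : {y : E | y ∈ Lp ∧ ∀ r ∈ Submodule.map (Pp : E →ₗ[ℂ] E) Wp, (inner ℂ r y : ℂ) = 0}
      = α '' ((N : Submodule ℂ E) : Set E) := by
    ext y
    simp only [Set.mem_setOf_eq]
    constructor
    · rintro ⟨hyLp, hyperp⟩
      have hy' : ∀ x ∈ Wp, (inner ℂ x y : ℂ) = 0 := by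
        intro x hx
        have h2 := hyperp (Pp x) (Submodule.mem_map_of_mem hx)
        rwa [hPp_inner x y hyLp] at h2
      obtain ⟨w, hw, hwy⟩ := (hWperp y).mp hy'
      have hyLm : α y ∈ Lm := hαLp y hyLp
      have hwLm : w ∈ Lm := by
        rw [← hwy, hα_invol] at hyLm
        exact hyLm
      exact ⟨w, (memN w).mpr ⟨hw, hker w hwLm⟩, hwy⟩
    · rintro ⟨w, hwN, rfl⟩
      have hmem := (memN w).mp hwN
      have hwLm : w ∈ Lm := (hker_iff w).mp hmem.2
      refine ⟨hαLm w hwLm, fun r hr => ?_⟩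
      obtain ⟨x, hx, rfl⟩ := Submodule.mem_map.mp hr
      show inner ℂ (Pp x) (α w) = 0
      rw [hPp_inner x (α w) (hαLm w hwLm)]
      exact hWp_orth x hx w hmem.1
  -- Part 4: equality of dimensions
  have hBcoe : ((Lp ⊓ (Submodule.map (Pp : E →ₗ[ℂ] E) Wp)ᗮ : Submodule ℂ E) : Set E)
      = α '' ((N : Submodule ℂ E) : Set E) := by
    rw [← goal3]
    ext y
    simp only [Set.mem_setOf_eq, SetLike.mem_coe, Submodule.mem_inf, Submodule.mem_orthogonal]
  set B : Submodule ℂ E := Lp ⊓ (Submodule.map (Pp : E →ₗ[ℂ] E) Wp)ᗮ with hBdef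
  have hmapN : ∀ w : ↥N, α (w : E) ∈ B := by
    intro w
    have h0 : α (w : E) ∈ (B : Set E) := by
      rw [hBcoe]
      exact ⟨w, w.2, rfl⟩
    exact h0
  have hmapB : ∀ y : ↥B, α (y : E) ∈ N := by
    intro y
    have h0 : (y : E) ∈ α '' ((N : Submodule ℂ E) : Set E) := by
      rw [← hBcoe]
      exact y.2
    obtain ⟨w, hw, hwy⟩ := h0
    rw [← hwy, hα_invol]
    exact hw
  have hsmulℝ : ∀ (r : ℝ) (v : E), α (r • v) = r • α v := by
    intro r v
    rw [← algebraMap_smul ℂ r v, ← algebraMap_smul ℂ r (α v), Complex.coe_algebraMap, hα_smul]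
    congr 1
    exact Complex.conj_ofReal r
  let e : ↥N ≃ₗ[ℝ] ↥B :=
    { toFun := fun w => ⟨α (w : E), hmapN w⟩
      invFun := fun y => ⟨α (y : E), hmapB y⟩
      map_add' := fun a b => Subtype.ext (by
        show α ((a : E) + (b : E)) = α (a : E) + α (b : E)
        exact hα_add _ _)
      map_smul' := fun r a => Subtype.ext (by
        show α (r • (a : E)) = r • α (a : E)
        exact hsmulℝ r (a : E))
      left_inv := fun w => Subtype.ext (hα_invol (w : E))
      right_inv := fun y => Subtype.ext (hα_invol (y : E)) }
  haveI : FiniteDimensional ℝ ↥N := Module.Finite.trans (R := ℝ) ℂ ↥N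
  have hfr : Module.finrank ℝ ↥N = Module.finrank ℝ ↥B := e.finrank_eq
  have h2N : 2 * Module.finrank ℂ ↥N = Module.finrank ℝ ↥N := by
    rw [← Module.finrank_mul_finrank ℝ ℂ ↥N, Complex.finrank_real_complex]
  have h2B : 2 * Module.finrank ℂ ↥B = Module.finrank ℝ ↥B := by
    rw [← Module.finrank_mul_finrank ℝ ℂ ↥B, Complex.finrank_real_complex]
  have goal4 : Module.finrank ℂ ↥N = Module.finrank ℂ ↥B := by omega
  exact ⟨hNfd, goal2, goal3, goal4⟩
end
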